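/- arXiv:1403.2481 — 6 statements merged into one kernel-verified Lean document; each statement's English description precedes it below -/
import Mathlib

section
/- Let $H$ be a cocommutative Hopf algebra over a field $F$, and let $M, N$ be $H$-modules. If $V$ is a finite-dimensional $H$-submodule of $M \otimes N$, then there exist finite-dimensional $H$-submodules $M_V \subseteq M$ and $N_V \subseteq N$ such that $V \subseteq M_V \otimes N_V$ inside $M \otimes N$. -/
open TensorProduct

set_option maxHeartbeats 1000000
set_option synthInstance.maxHeartbeats 400000
set_option linter.unusedSectionVars false

variable (F : Type*) [Field F] (H : Type*) [Ring H] [HopfAlgebra F H]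
  (M N : Type*) [AddCommGroup M] [Module F M] [Module H M]
  [IsScalarTower F H M] [SMulCommClass H F M]
  [AddCommGroup N] [Module F N] [Module H N]
  [IsScalarTower F H N] [SMulCommClass H F N]

/-- The action of `h ∈ H` on `M ⊗[F] N` via the comultiplication of `H`:
`h • (m ⊗ n) = ∑ h⁽¹⁾ m ⊗ h⁽²⁾ n`. -/
noncomputable def hopfTensorAction : H →ₗ[F] (M ⊗[F] N) →ₗ[F] M ⊗[F] N :=
  (TensorProduct.homTensorHomMap (RingHom.id F) M N M N).comp
    ((TensorProduct.map (Algebra.lsmul F F M).toLinearMap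
        (Algebra.lsmul F F N).toLinearMap).comp Coalgebra.comul)

/-- Contraction with a functional on the right factor. -/
noncomputable def cR (f : N →ₗ[F] F) : M ⊗[F] N →ₗ[F] M :=
  (TensorProduct.rid F M).toLinearMap ∘ₗ LinearMap.lTensor M f

@[simp] lemma cR_tmul (f : N →ₗ[F] F) (m : M) (n : N) :
    cR F M N f (m ⊗ₜ n) = f n • m := by simp [cR]

/-- Contraction with a functional on the left factor. -/
noncomputable def cL (g : M →ₗ[F] F) : M ⊗[F] N →ₗ[F] N :=
  (TensorProduct.lid F N).toLinearMap ∘ₗ LinearMap.rTensor N g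

@[simp] lemma cL_tmul (g : M →ₗ[F] F) (m : M) (n : N) :
    cL F M N g (m ⊗ₜ n) = g m • n := by simp [cL]

/-- The action of `H ⊗ H` on `M ⊗ N`. -/
noncomputable def actPair : H ⊗[F] H →ₗ[F] (M ⊗[F] N) →ₗ[F] M ⊗[F] N :=
  (TensorProduct.homTensorHomMap (RingHom.id F) M N M N) ∘ₗ
    TensorProduct.map (Algebra.lsmul F F M).toLinearMap (Algebra.lsmul F F N).toLinearMap

@[simp] lemma actPair_tmul (a b : H) :
    actPair F H M N (a ⊗ₜ b)
      = TensorProduct.map ((Algebra.lsmul F F M).toLinearMap a)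
          ((Algebra.lsmul F F N).toLinearMap b) := by
  simp [actPair]

lemma hopfTensorAction_eq :
    hopfTensorAction F H M N = actPair F H M N ∘ₗ Coalgebra.comul := by
  rw [hopfTensorAction, actPair, LinearMap.comp_assoc]

lemma actPair_mul (x y : H ⊗[F] H) :
    actPair F H M N (x * y) = actPair F H M N x ∘ₗ actPair F H M N y := by
  induction x using TensorProduct.induction_on with
  | zero => simp
  | add a b ha hb => simp [add_mul, ha, hb, LinearMap.add_comp]
  | tmul a b =>
    induction y using TensorProduct.induction_on with
    | zero => simp
    | add c d hc hd => simp [mul_add, hc, hd, LinearMap.comp_add]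
    | tmul c d =>
      simp only [Algebra.TensorProduct.tmul_mul_tmul, actPair_tmul]
      rw [← TensorProduct.map_comp]
      congr 1 <;>
        simp [map_mul, Module.End.mul_eq_comp]
/-- `tR (w ⊗ z) = (1 ⊗ S z) * w`. -/
noncomputable def tR : (H ⊗[F] H) ⊗[F] H →ₗ[F] H ⊗[F] H :=
  TensorProduct.lift ((LinearMap.mul F (H ⊗[F] H)).comp
    ((TensorProduct.mk F H H 1).comp (HopfAlgebra.antipode (R := F)))).flip

@[simp] lemma tR_tmul (w : H ⊗[F] H) (z : H) :
    tR F H (w ⊗ₜ z) = (1 ⊗ₜ[F] HopfAlgebra.antipode (R := F) z) * w := by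
  simp [tR]

/-- `tL (z ⊗ w) = (S z ⊗ 1) * w`. -/
noncomputable def tL : H ⊗[F] (H ⊗[F] H) →ₗ[F] H ⊗[F] H :=
  TensorProduct.lift ((LinearMap.mul F (H ⊗[F] H)).comp
    (((TensorProduct.mk F H H).flip 1).comp (HopfAlgebra.antipode (R := F))))

@[simp] lemma tL_tmul (z : H) (w : H ⊗[F] H) :
    tL F H (z ⊗ₜ w) = (HopfAlgebra.antipode (R := F) z ⊗ₜ[F] 1) * w := by
  simp [tL]

lemma key1 (hcocomm : (TensorProduct.comm F H H).toLinearMap.comp Coalgebra.comul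
      = (Coalgebra.comul : H →ₗ[F] H ⊗[F] H)) (h : H) :
    tR F H ((Coalgebra.comul (R := F)).rTensor H (Coalgebra.comul h)) = h ⊗ₜ[F] 1 := by
  have E : ∀ w : H ⊗[F] (H ⊗[F] H),
      tR F H ((TensorProduct.assoc F H H H).symm
        ((LinearMap.lTensor H (TensorProduct.comm F H H).toLinearMap) w))
      = LinearMap.lTensor H
          (LinearMap.mul' F H ∘ₗ (HopfAlgebra.antipode (R := F)).rTensor H) w := by
    intro w
    induction w using TensorProduct.induction_on with
    | zero => simp
    | add a b ha hb => simp [ha, hb]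
    | tmul x y =>
      induction y using TensorProduct.induction_on with
      | zero => simp
      | add c d hc hd => simp_all [TensorProduct.tmul_add]
      | tmul y z =>
        simp [Algebra.TensorProduct.tmul_mul_tmul]
  rw [← Coalgebra.coassoc_symm_apply]
  nth_rewrite 1 [← hcocomm]
  rw [LinearMap.lTensor_comp, LinearMap.comp_apply, E,
    ← LinearMap.comp_apply, ← LinearMap.lTensor_comp, LinearMap.comp_assoc,
    HopfAlgebra.mul_antipode_rTensor_comul, LinearMap.lTensor_comp,
    LinearMap.comp_apply, Coalgebra.lTensor_counit_comul]
  simp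

lemma key2 (h : H) :
    tL F H ((Coalgebra.comul (R := F)).lTensor H (Coalgebra.comul h)) = 1 ⊗ₜ[F] h := by
  have E : ∀ w : (H ⊗[F] H) ⊗[F] H,
      tL F H ((TensorProduct.assoc F H H H) w)
      = LinearMap.rTensor H
          (LinearMap.mul' F H ∘ₗ (HopfAlgebra.antipode (R := F)).rTensor H) w := by
    intro w
    induction w using TensorProduct.induction_on with
    | zero => simp
    | add a b ha hb => simp [ha, hb]
    | tmul x z =>
      induction x using TensorProduct.induction_on with
      | zero => simp
      | add c d hc hd => simp_all [TensorProduct.add_tmul]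
      | tmul x y =>
        simp [Algebra.TensorProduct.tmul_mul_tmul]
  rw [← Coalgebra.coassoc_apply, E,
    ← LinearMap.comp_apply, ← LinearMap.rTensor_comp, LinearMap.comp_assoc,
    HopfAlgebra.mul_antipode_rTensor_comul, LinearMap.rTensor_comp,
    LinearMap.comp_apply, Coalgebra.rTensor_counit_comul]
  simp

lemma key1_sum (hcocomm : (TensorProduct.comm F H H).toLinearMap.comp Coalgebra.comul
      = (Coalgebra.comul : H →ₗ[F] H ⊗[F] H)) (h : H) (r : Coalgebra.Repr F h (H × H)) :
    ∑ i ∈ r.index,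
        (1 ⊗ₜ[F] HopfAlgebra.antipode (R := F) (r.right i)) * Coalgebra.comul (r.left i)
      = h ⊗ₜ[F] 1 := by
  have := key1 F H hcocomm h
  rw [← r.eq, map_sum, map_sum] at this
  simpa using this

lemma key2_sum (h : H) (r : Coalgebra.Repr F h (H × H)) :
    ∑ i ∈ r.index,
        (HopfAlgebra.antipode (R := F) (r.left i) ⊗ₜ[F] 1) * Coalgebra.comul (r.right i)
      = 1 ⊗ₜ[F] h := by
  have := key2 F H h
  rw [← r.eq, map_sum, map_sum] at this
  simpa using this

lemma rTensor_lsmul_decomp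
    (hcocomm : (TensorProduct.comm F H H).toLinearMap.comp Coalgebra.comul
      = (Coalgebra.comul : H →ₗ[F] H ⊗[F] H)) (h : H) (r : Coalgebra.Repr F h (H × H)) :
    TensorProduct.map ((Algebra.lsmul F F M).toLinearMap h) LinearMap.id
        = ∑ i ∈ r.index,
            (TensorProduct.map LinearMap.id
              ((Algebra.lsmul F F N).toLinearMap
                (HopfAlgebra.antipode (R := F) (r.right i)))) ∘ₗ
            hopfTensorAction F H M N (r.left i) := by
  have e1 : actPair F H M N (h ⊗ₜ[F] 1)
      = TensorProduct.map ((Algebra.lsmul F F M).toLinearMap h) LinearMap.id := by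
    rw [actPair_tmul]
    congr 1
    simp [Module.End.one_eq_id]
  rw [← e1, ← key1_sum F H hcocomm h r, map_sum]
  refine Finset.sum_congr rfl fun i _ => ?_
  rw [actPair_mul, actPair_tmul,
    LinearMap.congr_fun (hopfTensorAction_eq F H M N) (r.left i), LinearMap.comp_apply]
  simp [Module.End.one_eq_id]

lemma lTensor_lsmul_decomp (h : H) (r : Coalgebra.Repr F h (H × H)) :
    TensorProduct.map LinearMap.id ((Algebra.lsmul F F N).toLinearMap h)
        = ∑ i ∈ r.index,
            (TensorProduct.map
              ((Algebra.lsmul F F M).toLinearMap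
                (HopfAlgebra.antipode (R := F) (r.left i))) LinearMap.id) ∘ₗ
            hopfTensorAction F H M N (r.right i) := by
  have e1 : actPair F H M N (1 ⊗ₜ[F] h)
      = TensorProduct.map LinearMap.id ((Algebra.lsmul F F N).toLinearMap h) := by
    rw [actPair_tmul]
    congr 1
    simp [Module.End.one_eq_id]
  rw [← e1, ← key2_sum F H h r, map_sum]
  refine Finset.sum_congr rfl fun i _ => ?_
  rw [actPair_mul, actPair_tmul,
    LinearMap.congr_fun (hopfTensorAction_eq F H M N) (r.right i), LinearMap.comp_apply]
  simp [Module.End.one_eq_id]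

/-- Writing `v` as a sum of tensors with right components in `W` and left components
being contractions of `v`. -/
lemma repr_right (v : M ⊗[F] N) (W : Submodule F N) [FiniteDimensional F W]
    (hv : v ∈ LinearMap.range (W.subtype.lTensor M)) :
    ∃ (k : ℕ) (p : Fin k → M) (q : Fin k → N),
      (∀ j, ∃ f : N →ₗ[F] F, p j = cR F M N f v) ∧ (∀ j, q j ∈ W) ∧
      v = ∑ j, p j ⊗ₜ[F] q j := by
  obtain ⟨W', hc⟩ := Submodule.exists_isCompl W
  let pr : N →ₗ[F] W := W.projectionOnto W' hc
  let b := Module.finBasis F W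
  let f : Fin (Module.finrank F W) → (N →ₗ[F] F) := fun j => (b.coord j) ∘ₗ pr
  refine ⟨Module.finrank F W, fun j => cR F M N (f j) v, fun j => (b j : N),
    fun j => ⟨f j, rfl⟩, fun j => (b j).2, ?_⟩
  obtain ⟨u, rfl⟩ := hv
  set T : M ⊗[F] N →ₗ[F] M ⊗[F] N :=
    ∑ j, ((TensorProduct.mk F M N).flip ((b j : N))) ∘ₗ cR F M N (f j) with hT
  have hfix : T ∘ₗ W.subtype.lTensor M = W.subtype.lTensor M := by
    apply TensorProduct.ext'
    intro m w
    simp only [hT, LinearMap.comp_apply, LinearMap.lTensor_tmul, Submodule.coe_subtype,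
      LinearMap.sum_apply, cR_tmul, LinearMap.flip_apply, TensorProduct.mk_apply]
    have : ∀ j, (f j) (w : N) = b.repr w j := by
      intro j
      simp [f, pr, Submodule.projectionOnto_apply_left hc w, Module.Basis.coord_apply]
    simp_rw [this]
    calc ∑ j, (b.repr w j • m) ⊗ₜ[F] (b j : N)
        = ∑ j, m ⊗ₜ[F] (b.repr w j • (b j : N)) := by
          refine Finset.sum_congr rfl fun j _ => ?_
          rw [TensorProduct.smul_tmul]
      _ = m ⊗ₜ[F] ((∑ j, b.repr w j • b j : W) : N) := by
          rw [← TensorProduct.tmul_sum]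
          congr 1
          push_cast
          rfl
      _ = m ⊗ₜ[F] (w : N) := by rw [b.sum_repr w]
  have h2 : T (W.subtype.lTensor M u) = W.subtype.lTensor M u :=
    LinearMap.congr_fun hfix u
  refine Eq.trans h2.symm ?_
  simp [hT, LinearMap.sum_apply]

lemma repr_left (v : M ⊗[F] N) (W : Submodule F M) [FiniteDimensional F W]
    (hv : v ∈ LinearMap.range (W.subtype.rTensor N)) :
    ∃ (k : ℕ) (p : Fin k → M) (q : Fin k → N),
      (∀ j, p j ∈ W) ∧ (∀ j, ∃ g : M →ₗ[F] F, q j = cL F M N g v) ∧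
      v = ∑ j, p j ⊗ₜ[F] q j := by
  obtain ⟨W', hc⟩ := Submodule.exists_isCompl W
  let pr : M →ₗ[F] W := W.projectionOnto W' hc
  let b := Module.finBasis F W
  let g : Fin (Module.finrank F W) → (M →ₗ[F] F) := fun j => (b.coord j) ∘ₗ pr
  refine ⟨Module.finrank F W, fun j => (b j : M), fun j => cL F M N (g j) v,
    fun j => (b j).2, fun j => ⟨g j, rfl⟩, ?_⟩
  obtain ⟨u, rfl⟩ := hv
  set T : M ⊗[F] N →ₗ[F] M ⊗[F] N :=
    ∑ j, ((TensorProduct.mk F M N) ((b j : M))) ∘ₗ cL F M N (g j) with hT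
  have hfix : T ∘ₗ W.subtype.rTensor N = W.subtype.rTensor N := by
    apply TensorProduct.ext'
    intro w n
    simp only [hT, LinearMap.comp_apply, LinearMap.rTensor_tmul, Submodule.coe_subtype,
      LinearMap.sum_apply, cL_tmul, TensorProduct.mk_apply]
    have : ∀ j, (g j) (w : M) = b.repr w j := by
      intro j
      simp [g, pr, Submodule.projectionOnto_apply_left hc w, Module.Basis.coord_apply]
    simp_rw [this]
    calc ∑ j, (b j : M) ⊗ₜ[F] (b.repr w j • n)
        = ∑ j, (b.repr w j • (b j : M)) ⊗ₜ[F] n := by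
          refine Finset.sum_congr rfl fun j _ => ?_
          rw [TensorProduct.smul_tmul]
      _ = ((∑ j, b.repr w j • b j : W) : M) ⊗ₜ[F] n := by
          rw [← TensorProduct.sum_tmul]
          congr 1
          push_cast
          rfl
      _ = (w : M) ⊗ₜ[F] n := by rw [b.sum_repr w]
  have h2 : T (W.subtype.rTensor N u) = W.subtype.rTensor N u :=
    LinearMap.congr_fun hfix u
  refine Eq.trans h2.symm ?_
  simp [hT, LinearMap.sum_apply]


/-- The span of all right-contractions of elements of `V`. -/
noncomputable def MVsub (V : Submodule F (M ⊗[F] N)) : Submodule F M :=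
  ⨆ f : N →ₗ[F] F, V.map (cR F M N f)

/-- The span of all left-contractions of elements of `V`. -/
noncomputable def NVsub (V : Submodule F (M ⊗[F] N)) : Submodule F N :=
  ⨆ g : M →ₗ[F] F, V.map (cL F M N g)

lemma mem_MVsub {V : Submodule F (M ⊗[F] N)} (f : N →ₗ[F] F) {v : M ⊗[F] N} (hv : v ∈ V) :
    cR F M N f v ∈ MVsub F M N V :=
  (le_iSup (fun f => V.map (cR F M N f)) f) (Submodule.mem_map_of_mem hv)

lemma mem_NVsub {V : Submodule F (M ⊗[F] N)} (g : M →ₗ[F] F) {v : M ⊗[F] N} (hv : v ∈ V) :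
    cL F M N g v ∈ NVsub F M N V :=
  (le_iSup (fun g => V.map (cL F M N g)) g) (Submodule.mem_map_of_mem hv)

lemma cR_comp_map (f : N →ₗ[F] F) (g : N →ₗ[F] N) :
    cR F M N f ∘ₗ TensorProduct.map LinearMap.id g = cR F M N (f ∘ₗ g) := by
  apply TensorProduct.ext'
  intro m n
  simp

lemma cL_comp_map (g : M →ₗ[F] F) (g' : M →ₗ[F] M) :
    cL F M N g ∘ₗ TensorProduct.map g' LinearMap.id = cL F M N (g ∘ₗ g') := by
  apply TensorProduct.ext'
  intro m n
  simp

lemma MVsub_stable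
    (hcocomm : (TensorProduct.comm F H H).toLinearMap.comp Coalgebra.comul
      = (Coalgebra.comul : H →ₗ[F] H ⊗[F] H))
    (V : Submodule F (M ⊗[F] N))
    (hV : ∀ h : H, ∀ v ∈ V, hopfTensorAction F H M N h v ∈ V) (h : H) :
    ∀ m ∈ MVsub F M N V, h • m ∈ MVsub F M N V := by
  have key : (MVsub F M N V).map ((Algebra.lsmul F F M).toLinearMap h) ≤ MVsub F M N V := by
    rw [MVsub, Submodule.map_iSup]
    refine iSup_le fun f => ?_
    rw [← Submodule.map_comp]
    have comm1 : (Algebra.lsmul F F M).toLinearMap h ∘ₗ cR F M N f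
        = cR F M N f ∘ₗ TensorProduct.map ((Algebra.lsmul F F M).toLinearMap h) LinearMap.id := by
      apply TensorProduct.ext'
      intro m n
      simp only [LinearMap.comp_apply, cR_tmul, TensorProduct.map_tmul, LinearMap.id_coe,
        id_eq, AlgHom.toLinearMap_apply, Algebra.lsmul_coe, map_smul]
    rw [comm1, rTensor_lsmul_decomp F H M N hcocomm h (Coalgebra.Repr.arbitrary F h)]
    rintro x ⟨v, hv, rfl⟩
    rw [LinearMap.comp_apply, LinearMap.sum_apply, map_sum]
    refine Submodule.sum_mem _ fun i _ => ?_
    rw [LinearMap.comp_apply, ← LinearMap.comp_apply (cR F M N f), cR_comp_map]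
    exact mem_MVsub F M N _ (hV _ _ hv)
  intro m hm
  exact key (Submodule.mem_map_of_mem hm)

lemma NVsub_stable
    (V : Submodule F (M ⊗[F] N))
    (hV : ∀ h : H, ∀ v ∈ V, hopfTensorAction F H M N h v ∈ V) (h : H) :
    ∀ n ∈ NVsub F M N V, h • n ∈ NVsub F M N V := by
  have key : (NVsub F M N V).map ((Algebra.lsmul F F N).toLinearMap h) ≤ NVsub F M N V := by
    rw [NVsub, Submodule.map_iSup]
    refine iSup_le fun g => ?_
    rw [← Submodule.map_comp]
    have comm1 : (Algebra.lsmul F F N).toLinearMap h ∘ₗ cL F M N g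
        = cL F M N g ∘ₗ TensorProduct.map LinearMap.id ((Algebra.lsmul F F N).toLinearMap h) := by
      apply TensorProduct.ext'
      intro m n
      simp only [LinearMap.comp_apply, cL_tmul, TensorProduct.map_tmul, LinearMap.id_coe,
        id_eq, AlgHom.toLinearMap_apply, Algebra.lsmul_coe, map_smul]
    rw [comm1, lTensor_lsmul_decomp F H M N h (Coalgebra.Repr.arbitrary F h)]
    rintro x ⟨v, hv, rfl⟩
    rw [LinearMap.comp_apply, LinearMap.sum_apply, map_sum]
    refine Submodule.sum_mem _ fun i _ => ?_
    rw [LinearMap.comp_apply, ← LinearMap.comp_apply (cL F M N g), cL_comp_map]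
    exact mem_NVsub F M N _ (hV _ _ hv)
  intro n hn
  exact key (Submodule.mem_map_of_mem hn)

lemma MVsub_fd (V : Submodule F (M ⊗[F] N)) [FiniteDimensional F V] :
    FiniteDimensional F (MVsub F M N V) := by
  obtain ⟨s, hs⟩ : V.FG := (Submodule.fg_iff_finiteDimensional V).2 inferInstance
  obtain ⟨M', hM'fin, hM'⟩ :=
    TensorProduct.exists_finite_submodule_left_of_setFinite (↑s : Set (M ⊗[F] N)) s.finite_toSet
  haveI : FiniteDimensional F M' := hM'fin
  have hVle : V ≤ LinearMap.range (M'.subtype.rTensor N) := by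
    rw [← hs]
    exact Submodule.span_le.2 hM'
  have hle : MVsub F M N V ≤ M' := by
    refine iSup_le fun f => Submodule.map_le_iff_le_comap.2 fun v hv => ?_
    obtain ⟨u, hu⟩ := hVle hv
    simp only [Submodule.mem_comap]
    rw [← hu]
    have e : cR F M N f ∘ₗ M'.subtype.rTensor N = M'.subtype ∘ₗ cR F M' N f := by
      apply TensorProduct.ext'
      intro m n
      simp
    rw [← LinearMap.comp_apply, e]
    exact Submodule.coe_mem _
  exact Submodule.finiteDimensional_of_le hle

lemma NVsub_fd (V : Submodule F (M ⊗[F] N)) [FiniteDimensional F V] :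
    FiniteDimensional F (NVsub F M N V) := by
  obtain ⟨s, hs⟩ : V.FG := (Submodule.fg_iff_finiteDimensional V).2 inferInstance
  obtain ⟨N', hN'fin, hN'⟩ :=
    TensorProduct.exists_finite_submodule_right_of_setFinite (↑s : Set (M ⊗[F] N)) s.finite_toSet
  haveI : FiniteDimensional F N' := hN'fin
  have hVle : V ≤ LinearMap.range (N'.subtype.lTensor M) := by
    rw [← hs]
    exact Submodule.span_le.2 hN'
  have hle : NVsub F M N V ≤ N' := by
    refine iSup_le fun g => Submodule.map_le_iff_le_comap.2 fun v hv => ?_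
    obtain ⟨u, hu⟩ := hVle hv
    simp only [Submodule.mem_comap]
    rw [← hu]
    have e : cL F M N g ∘ₗ N'.subtype.lTensor M = N'.subtype ∘ₗ cL F M N' g := by
      apply TensorProduct.ext'
      intro m n
      simp
    rw [← LinearMap.comp_apply, e]
    exact Submodule.coe_mem _
  exact Submodule.finiteDimensional_of_le hle

lemma le_mapIncl_MVsub_NVsub (V : Submodule F (M ⊗[F] N)) :
    V ≤ LinearMap.range (TensorProduct.mapIncl (MVsub F M N V) (NVsub F M N V)) := by
  intro v hv
  obtain ⟨W₀, hW₀fin, hW₀⟩ :=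
    TensorProduct.exists_finite_submodule_right_of_setFinite {v} (Set.finite_singleton v)
  haveI : FiniteDimensional F W₀ := hW₀fin
  obtain ⟨k, p, q, hp, hq, hvpq⟩ := repr_right F M N v W₀ (hW₀ rfl)
  have hpM : ∀ j, p j ∈ MVsub F M N V := fun j => by
    obtain ⟨f, hf⟩ := hp j
    rw [hf]
    exact mem_MVsub F M N f hv
  set W₁ : Submodule F M := Submodule.span F (Set.range p) with hW₁
  haveI : FiniteDimensional F W₁ := FiniteDimensional.span_of_finite F (Set.finite_range p)
  have hvW₁ : v ∈ LinearMap.range (W₁.subtype.rTensor N) := by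
    refine ⟨∑ j, (⟨p j, Submodule.subset_span (Set.mem_range_self j)⟩ : W₁) ⊗ₜ[F] q j, ?_⟩
    rw [map_sum, hvpq]
    simp
  obtain ⟨k', p', q', hp', hq', hvpq'⟩ := repr_left F M N v W₁ hvW₁
  have hW₁le : W₁ ≤ MVsub F M N V := Submodule.span_le.2 (by
    rintro x ⟨j, rfl⟩
    exact hpM j)
  have hqN : ∀ j, q' j ∈ NVsub F M N V := fun j => by
    obtain ⟨g, hg⟩ := hq' j
    rw [hg]
    exact mem_NVsub F M N g hv
  refine ⟨∑ j, (⟨p' j, hW₁le (hp' j)⟩ : MVsub F M N V) ⊗ₜ[F] (⟨q' j, hqN j⟩ : NVsub F M N V), ?_⟩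
  rw [map_sum, hvpq']
  simp [TensorProduct.mapIncl]

/-- Package an `H`-stable `F`-subspace as an `H`-submodule. -/
def toH (W : Submodule F M) (hW : ∀ h : H, ∀ m ∈ W, h • m ∈ W) : Submodule H M where
  carrier := W
  add_mem' := W.add_mem
  zero_mem' := W.zero_mem
  smul_mem' := fun h {m} hm => hW h m hm

lemma toH_restrict (W : Submodule F M) (hW : ∀ h : H, ∀ m ∈ W, h • m ∈ W) :
    (toH F H M W hW).restrictScalars F = W := by
  ext x
  rfl

/-- Over a cocommutative Hopf algebra `H`, any finite-dimensional `H`-submodule `V` of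
`M ⊗ N` (a subspace invariant under the comultiplication action) is contained in
`M_V ⊗ N_V` for some finite-dimensional `H`-submodules `M_V ⊆ M`, `N_V ⊆ N`. -/
theorem finiteDimensional_submodule_of_tensor_le
    (hcocomm : (TensorProduct.comm F H H).toLinearMap.comp Coalgebra.comul
        = (Coalgebra.comul : H →ₗ[F] H ⊗[F] H))
    (V : Submodule F (M ⊗[F] N)) [FiniteDimensional F V]
    (hV : ∀ h : H, ∀ v ∈ V, hopfTensorAction F H M N h v ∈ V) :
    ∃ (MV : Submodule H M) (NV : Submodule H N),
      FiniteDimensional F (MV.restrictScalars F) ∧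
      FiniteDimensional F (NV.restrictScalars F) ∧
      V ≤ LinearMap.range
        (TensorProduct.mapIncl (MV.restrictScalars F) (NV.restrictScalars F)) := by
  refine ⟨toH F H M (MVsub F M N V) (MVsub_stable F H M N hcocomm V hV),
    toH F H N (NVsub F M N V) (NVsub_stable F H M N V hV), ?_, ?_, ?_⟩
  · rw [toH_restrict]
    exact MVsub_fd F M N V
  · rw [toH_restrict]
    exact NVsub_fd F M N V
  · rw [toH_restrict, toH_restrict]
    exact le_mapIncl_MVsub_NVsub F M N V
end

section
/- Let $\mathfrak{G}$ be a Lie algebra over a field $F$, $I \subseteq \mathfrak{G}$ an ideal, $U$ a simple $\mathfrak{G}/I$-module (regarded as a $\mathfrak{G}$-module annihilated by $I$), and $W$ a $\mathfrak{G}$-module that is simple as an $I$-module, on which $I$ acts densely (i.e., for every $w \in W$ and $g \in \mathfrak{G}$ there exists $k \in I$ with $kw = gw$), and such that $\mathrm{End}_I(W) = F$ (every $I$-module endomorphism of $W$ is scalar). Then $U \otimes W$ is a simple $\mathfrak{G}$-module. -/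
open TensorProduct

/-- Let `L` be a Lie algebra over a field `F`, `I ⊆ L` an ideal, `U` a simple `L`-module
annihilated by `I` (i.e. a simple `L/I`-module), and `W` an `L`-module which is simple over
`I`, on which `I` acts densely (for every `w` and `g ∈ L` some `k ∈ I` has `⁅k,w⁆ = ⁅g,w⁆`),
and with `End_I(W) = F`.  Then `U ⊗ W` is a simple `L`-module. -/
theorem tensor_simple_of_simple_of_dense
    (F : Type*) [Field F] (L : Type*) [LieRing L] [LieAlgebra F L]
    (I : LieIdeal F L)
    (U : Type*) [AddCommGroup U] [Module F U] [LieRingModule L U] [LieModule F L U]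
    (W : Type*) [AddCommGroup W] [Module F W] [LieRingModule L W] [LieModule F L W]
    -- `U` is a simple `L`-module annihilated by `I`, i.e. a simple `L/I`-module:
    (hUsimple : IsSimpleOrder (LieSubmodule F L U))
    (hUann : ∀ x ∈ I, ∀ u : U, ⁅x, u⁆ = 0)
    -- `W` is simple as an `I`-module:
    (hWnontriv : Nontrivial W)
    (hWsimple : ∀ p : Submodule F W, (∀ x ∈ I, ∀ w ∈ p, ⁅x, w⁆ ∈ p) → p = ⊥ ∨ p = ⊤)
    -- `I` acts densely on `W`:
    (hdense : ∀ (w : W) (g : L), ∃ k ∈ I, ⁅k, w⁆ = ⁅g, w⁆)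
    -- `End_I(W) = F`:
    (hEnd : ∀ f : W →ₗ[F] W, (∀ x ∈ I, ∀ w : W, f ⁅x, w⁆ = ⁅x, f w⁆) →
      ∃ c : F, f = c • LinearMap.id) :
    IsSimpleOrder (LieSubmodule F L (U ⊗[F] W)) := by
  classical
  let ι := Module.Basis.ofVectorSpaceIndex F U
  let bU : Module.Basis ι F U := Module.Basis.ofVectorSpace F U
  let e : (U ⊗[F] W) ≃ₗ[F] (ι →₀ W) :=
    (TensorProduct.congr bU.repr (LinearEquiv.refl F W)).trans
      (TensorProduct.finsuppScalarLeft F W ι)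
  have e_tmul : ∀ (u : U) (w : W) (i : ι), e (u ⊗ₜ[F] w) i = bU.repr u i • w := by
    intro u w i
    simp [e]
  -- the action of an endomorphism of `W` on `U ⊗ W` through `e`
  have hkey : ∀ (a : Module.End F W) (m : U ⊗[F] W),
      e (a.lTensor U m) = Finsupp.mapRange ⇑a (map_zero a) (e m) := by
    intro a m
    induction m using TensorProduct.induction_on with
    | zero => simp
    | tmul u w => ext i; simp [e_tmul]
    | add x y hx hy => ext i; simp only [map_add, Finsupp.mapRange_apply, Finsupp.add_apply,
        hx, hy, map_add]
  -- elements of `I` act on `U ⊗ W` through the second factor only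
  have hlie : ∀ x ∈ I, ∀ m : U ⊗[F] W,
      (LieModule.toEnd F L W x).lTensor U m = ⁅x, m⁆ := by
    intro x hx m
    induction m using TensorProduct.induction_on with
    | zero => simp
    | tmul u w =>
      rw [LinearMap.lTensor_tmul, TensorProduct.LieModule.lie_tmul_right, hUann x hx u]
      simp
    | add m n hm hn => rw [map_add, lie_add, hm, hn]
  -- the associative algebra generated by the action of `I` on `W`
  let s : Set (Module.End F W) := (fun x => LieModule.toEnd F L W x) '' (I : Set L)
  let A : Subalgebra F (Module.End F W) := Algebra.adjoin F s
  -- nontriviality of `U`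
  have hUnontriv : ∃ u : U, u ≠ 0 := by
    by_contra h
    push_neg at h
    exact hUsimple.bot_ne_top (by ext u; simp [h u, LieSubmodule.mem_bot])
  -- nonzero pure tensors are nonzero
  have tmul_ne_zero : ∀ (u : U) (w : W), u ≠ 0 → w ≠ 0 → u ⊗ₜ[F] w ≠ 0 := by
    intro u w hu hw h
    have hr : bU.repr u ≠ 0 := by simpa using hu
    obtain ⟨i, hi⟩ := Finsupp.ne_iff.1 hr
    rw [Finsupp.coe_zero, Pi.zero_apply] at hi
    have h0 : bU.repr u i • w = 0 := by rw [← e_tmul u w i, h]; simp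
    rcases smul_eq_zero.1 h0 with h1 | h1
    · exact hi h1
    · exact hw h1
  obtain ⟨u₁, hu₁⟩ := hUnontriv
  obtain ⟨w₀, hw₀⟩ := exists_ne (0 : W)
  haveI : Nontrivial (LieSubmodule F L (U ⊗[F] W)) := by
    refine ⟨⊥, ⊤, fun h => ?_⟩
    have hmem : u₁ ⊗ₜ[F] w₀ ∈ (⊥ : LieSubmodule F L (U ⊗[F] W)) :=
      h ▸ LieSubmodule.mem_top _
    exact tmul_ne_zero u₁ w₀ hu₁ hw₀ ((LieSubmodule.mem_bot _).mp hmem)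
  refine ⟨fun M => ?_⟩
  by_cases hbot : M = ⊥
  · exact Or.inl hbot
  right
  -- `M` is stable under the algebra `A` generated by `I`, acting through the second factor
  have hMstable : ∀ a ∈ A, ∀ m ∈ M, a.lTensor U m ∈ M := by
    intro a ha
    induction ha using Algebra.adjoin_induction with
    | mem a ha =>
      obtain ⟨x, hx, rfl⟩ := ha
      intro m hm
      rw [hlie x hx m]
      exact M.lie_mem hm
    | algebraMap r =>
      intro m hm
      rw [Module.algebraMap_end_eq_smul_id, LinearMap.lTensor_smul, LinearMap.smul_apply,
        LinearMap.lTensor_id, LinearMap.id_apply]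
      exact M.smul_mem r hm
    | add a b ha hb hpa hpb =>
      intro m hm
      rw [LinearMap.lTensor_add, LinearMap.add_apply]
      exact M.add_mem (hpa m hm) (hpb m hm)
    | mul a b ha hb hpa hpb =>
      intro m hm
      rw [LinearMap.lTensor_mul, Module.End.mul_apply]
      exact hpa _ (hpb m hm)
  -- choose a nonzero element of `M` of minimal support
  obtain ⟨m₀, hm₀M, hm₀⟩ : ∃ m ∈ M, m ≠ 0 := by
    by_contra h
    push_neg at h
    exact hbot ((LieSubmodule.eq_bot_iff M).2 h)
  have hP : ∃ n, ∃ m ∈ M, m ≠ 0 ∧ (e m).support.card = n := ⟨_, m₀, hm₀M, hm₀, rfl⟩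
  obtain ⟨m, hmM, hm, hcard⟩ := Nat.find_spec hP
  have hmin : ∀ m' ∈ M, (e m').support.card < Nat.find hP → m' = 0 := by
    intro m' hm' hlt
    by_contra h
    exact Nat.find_min hP hlt ⟨m', hm', h, rfl⟩
  set f : ι →₀ W := e m with hf
  have hfne : f ≠ 0 := fun h => hm (e.map_eq_zero_iff.1 (hf ▸ h))
  obtain ⟨i₀, hi₀⟩ := Finsupp.support_nonempty_iff.2 hfne
  set w₁ : W := f i₀ with hw₁def
  have hw₁ : w₁ ≠ 0 := Finsupp.mem_support_iff.1 hi₀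
  -- if an element of `A` kills `w₁`, it kills all the components of `m`
  have hkill : ∀ a ∈ A, a w₁ = 0 → ∀ i, a (f i) = 0 := by
    intro a ha h0 i
    have hmem : a.lTensor U m ∈ M := hMstable a ha m hmM
    have hsupp : (e (a.lTensor U m)).support ⊆ f.support.erase i₀ := by
      intro j hj
      rw [hkey, Finsupp.mem_support_iff, Finsupp.mapRange_apply, ← hf] at hj
      refine Finset.mem_erase.2 ⟨?_, Finsupp.mem_support_iff.2 fun hz => hj (by rw [hz, map_zero])⟩
      intro hji
      exact hj (by rw [hji, ← hw₁def, h0])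
    have hzero : a.lTensor U m = 0 := by
      refine hmin _ hmem (lt_of_le_of_lt (Finset.card_le_card hsupp) ?_)
      rw [← hcard]
      exact Finset.card_erase_lt_of_mem hi₀
    have hz : Finsupp.mapRange ⇑a (map_zero a) f = 0 := by
      rw [hf, ← hkey, hzero, map_zero]
    have := congrArg (fun g : ι →₀ W => g i) hz
    simpa using this
  -- the orbit `A • w₁` is all of `W`
  let p : Submodule F W :=
    { carrier := {w | ∃ a ∈ A, a w₁ = w}
      add_mem' := by rintro w w' ⟨a, ha, rfl⟩ ⟨b, hb, rfl⟩; exact ⟨a + b, add_mem ha hb, by simp⟩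
      zero_mem' := ⟨0, zero_mem A, by simp⟩
      smul_mem' := by rintro cc w ⟨a, ha, rfl⟩; exact ⟨cc • a, Subalgebra.smul_mem A ha cc, by simp⟩ }
  have hptop : ∀ w : W, ∃ a ∈ A, a w₁ = w := by
    have hstable : ∀ x ∈ I, ∀ w ∈ p, ⁅x, w⁆ ∈ p := by
      rintro x hx w ⟨a, ha, rfl⟩
      exact ⟨LieModule.toEnd F L W x * a,
        mul_mem (Algebra.subset_adjoin ⟨x, hx, rfl⟩) ha, by simp⟩
    have hw₁p : w₁ ∈ p := ⟨1, one_mem A, by simp⟩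
    rcases hWsimple p hstable with h | h
    · rw [h] at hw₁p
      exact absurd ((Submodule.mem_bot F).1 hw₁p) hw₁
    · intro w
      have : w ∈ p := h.symm ▸ Submodule.mem_top
      exact this
  choose pick pickA pickw using hptop
  have welldef : ∀ a ∈ A, ∀ b ∈ A, a w₁ = b w₁ → ∀ i, a (f i) = b (f i) := by
    intro a ha b hb hab i
    have := hkill (a - b) (sub_mem ha hb) (by simp [LinearMap.sub_apply, hab]) i
    rw [LinearMap.sub_apply, sub_eq_zero] at this
    exact this
  -- each component of `m` is a scalar multiple of `w₁`
  have hpure : ∀ i : ι, ∃ cc : F, f i = cc • w₁ := by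
    intro i
    let g : W →ₗ[F] W :=
      { toFun := fun w => pick w (f i)
        map_add' := fun w w' => by
          show pick (w + w') (f i) = pick w (f i) + pick w' (f i)
          rw [welldef (pick (w + w')) (pickA _) (pick w + pick w')
            (add_mem (pickA w) (pickA w')) (by simp [pickw]) i]
          simp
        map_smul' := fun cc w => by
          show pick (cc • w) (f i) = cc • pick w (f i)
          rw [welldef (pick (cc • w)) (pickA _) (cc • pick w)
            (Subalgebra.smul_mem A (pickA w) cc) (by simp [pickw]) i]
          simp }
    have hg : ∀ x ∈ I, ∀ w : W, g ⁅x, w⁆ = ⁅x, g w⁆ := by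
      intro x hx w
      have h1 : pick ⁅x, w⁆ (f i) = (LieModule.toEnd F L W x * pick w) (f i) :=
        welldef _ (pickA _) _ (mul_mem (Algebra.subset_adjoin ⟨x, hx, rfl⟩) (pickA w))
          (by simp [pickw]) i
      simpa [g] using h1
    obtain ⟨cc, hcc⟩ := hEnd g hg
    refine ⟨cc, ?_⟩
    have h1 : g w₁ = f i := by
      have := welldef (pick w₁) (pickA w₁) 1 (one_mem A) (by simp [pickw]) i
      simpa [g] using this
    rw [← h1, hcc]
    simp
  choose cc hcc using hpure
  -- hence `m` is a pure tensor
  let u₀ : U := ∑ i ∈ f.support, cc i • bU i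
  have hrepr : ∀ j : ι, bU.repr u₀ j = if j ∈ f.support then cc j else 0 := by
    intro j
    simp only [u₀, map_sum, map_smul, Module.Basis.repr_self, Finsupp.smul_single, smul_eq_mul, mul_one,
      Finsupp.finset_sum_apply, Finsupp.single_apply]
    rw [Finset.sum_ite_eq' f.support j cc]
  have hmu : m = u₀ ⊗ₜ[F] w₁ := by
    apply e.injective
    ext j
    rw [← hf, e_tmul, hrepr j]
    by_cases hj : j ∈ f.support
    · rw [if_pos hj, ← hcc j]
    · rw [if_neg hj, zero_smul, Finsupp.notMem_support_iff.1 hj]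
  have hu₀ : u₀ ≠ 0 := fun h => hm (by rw [hmu, h, TensorProduct.zero_tmul])
  -- every `u₀ ⊗ w` lies in `M`
  have hMw : ∀ w : W, u₀ ⊗ₜ[F] w ∈ M := by
    let q : Submodule F W :=
      { carrier := {w | u₀ ⊗ₜ[F] w ∈ M}
        add_mem' := fun {w w'} h h' => by
          simpa [TensorProduct.tmul_add] using M.add_mem h h'
        zero_mem' := by simpa using M.zero_mem
        smul_mem' := fun c w h => by
          simpa [TensorProduct.tmul_smul] using M.smul_mem c h }
    have hstable : ∀ x ∈ I, ∀ w ∈ q, ⁅x, w⁆ ∈ q := by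
      intro x hx w hw
      have h1 : ⁅x, u₀ ⊗ₜ[F] w⁆ ∈ M := M.lie_mem hw
      rw [TensorProduct.LieModule.lie_tmul_right, hUann x hx, TensorProduct.zero_tmul,
        zero_add] at h1
      exact h1
    have hw₁q : w₁ ∈ q := by
      show u₀ ⊗ₜ[F] w₁ ∈ M
      rw [← hmu]; exact hmM
    rcases hWsimple q hstable with h | h
    · rw [h] at hw₁q
      exact absurd ((Submodule.mem_bot F).1 hw₁q) hw₁
    · intro w
      have : w ∈ q := h.symm ▸ Submodule.mem_top
      exact this
  -- the set of `u` with all `u ⊗ w ∈ M` is a Lie submodule of `U`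
  let Uset : LieSubmodule F L U :=
    { carrier := {u | ∀ w : W, u ⊗ₜ[F] w ∈ M}
      add_mem' := fun {u u'} h h' w => by
        simpa [TensorProduct.add_tmul] using M.add_mem (h w) (h' w)
      zero_mem' := fun w => by simpa using M.zero_mem
      smul_mem' := fun c u h w => by
        simpa [TensorProduct.smul_tmul'] using M.smul_mem c (h w)
      lie_mem := fun {x u} h w => by
        have h1 : ⁅x, u ⊗ₜ[F] w⁆ ∈ M := M.lie_mem (h w)
        rw [TensorProduct.LieModule.lie_tmul_right] at h1
        have h2 := M.sub_mem h1 (h ⁅x, w⁆)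
        simpa using h2 }
  have hUtop : ∀ u : U, ∀ w : W, u ⊗ₜ[F] w ∈ M := by
    rcases hUsimple.eq_bot_or_eq_top Uset with h | h
    · exfalso
      have hU0 : u₀ ∈ Uset := hMw
      rw [h] at hU0
      exact hu₀ ((LieSubmodule.mem_bot _).mp hU0)
    · intro u w
      have : u ∈ Uset := h.symm ▸ LieSubmodule.mem_top u
      exact this w
  ext mm
  simp only [LieSubmodule.mem_top, iff_true]
  induction mm using TensorProduct.induction_on with
  | zero => exact M.zero_mem
  | tmul u w => exact hUtop u w
  | add a b ha hb => exact M.add_mem ha hb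
end

section
/- Let $\mathfrak{G}$ be a Lie algebra over a field $F$, $I \subseteq \mathfrak{G}$ an ideal, $U$ a $\mathfrak{G}$-module annihilated by $I$, and $W$ a $\mathfrak{G}$-module such that $I$ acts densely on $W$: for every $w \in W$ and $g \in \mathfrak{G}$ there is $k \in I$ with $kw = gw$. If $U$ is simple over $\mathfrak{G}$ and $u \otimes w \in U \otimes W$ is a nonzero simple tensor, then every simple tensor of the form $u' \otimes w$ (for $u' \in U$) lies in the $\mathfrak{G}$-submodule of $U \otimes W$ generated by $u \otimes w$. -/
open TensorProduct

/-- Let `L` be a Lie algebra over a field `F`, `I` an ideal, `U` a simple `L`-module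
annihilated by `I`, and `W` an `L`-module on which `I` acts densely.  If `u ⊗ w` is a
nonzero simple tensor, then every simple tensor `u' ⊗ w` lies in the `L`-submodule of
`U ⊗ W` generated by `u ⊗ w`. -/
theorem simple_tensors_mem_lieSpan
    (F : Type*) [Field F] (L : Type*) [LieRing L] [LieAlgebra F L]
    (I : LieIdeal F L)
    (U : Type*) [AddCommGroup U] [Module F U] [LieRingModule L U] [LieModule F L U]
    (W : Type*) [AddCommGroup W] [Module F W] [LieRingModule L W] [LieModule F L W]
    (hUsimple : IsSimpleOrder (LieSubmodule F L U))
    (hUann : ∀ x ∈ I, ∀ u : U, ⁅x, u⁆ = 0)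
    (hdense : ∀ (w : W) (g : L), ∃ k ∈ I, ⁅k, w⁆ = ⁅g, w⁆)
    (u : U) (w : W) (h0 : u ⊗ₜ[F] w ≠ 0) :
    ∀ u' : U, u' ⊗ₜ[F] w ∈ LieSubmodule.lieSpan F L {u ⊗ₜ[F] w} := by
  set N := LieSubmodule.lieSpan F L {u ⊗ₜ[F] w} with hN
  set S : LieSubmodule F L U :=
    { carrier := {u' : U | u' ⊗ₜ[F] w ∈ N}
      add_mem' := fun {a b} ha hb => by
        simp only [Set.mem_setOf_eq, TensorProduct.add_tmul] at *
        exact N.add_mem ha hb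
      zero_mem' := by
        simp only [Set.mem_setOf_eq, TensorProduct.zero_tmul]
        exact N.zero_mem
      smul_mem' := fun c a ha => by
        simp only [Set.mem_setOf_eq, TensorProduct.smul_tmul'] at *
        exact N.smul_mem c ha
      lie_mem := fun {g a} ha => by
        simp only [Set.mem_setOf_eq] at *
        obtain ⟨k, hkI, hk⟩ := hdense w g
        have key : ⁅g - k, a ⊗ₜ[F] w⁆ = ⁅g, a⁆ ⊗ₜ[F] w := by
          rw [sub_lie, TensorProduct.LieModule.lie_tmul_right, TensorProduct.LieModule.lie_tmul_right,
            hUann k hkI a, hk, TensorProduct.zero_tmul]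
          abel
        rw [← key]
        exact N.lie_mem ha } with hS
  have huS : u ∈ S := LieSubmodule.subset_lieSpan rfl
  have hSne : S ≠ ⊥ := by
    intro hbot
    rw [hbot] at huS
    have : u = 0 := by simpa using huS
    exact h0 (by rw [this, TensorProduct.zero_tmul])
  have hStop : S = ⊤ := (hUsimple.eq_bot_or_eq_top S).resolve_left hSne
  intro u'
  have : u' ∈ S := hStop ▸ LieSubmodule.mem_top u'
  exact this
end

section
/- Let $V$ be a vector space over a field $F$ with basis indexed by $\mathbb{N}$, identify $V^*$ with the space of all sequences $F^{\mathbb{N}}$ and $V_*$ with the subspace of finitely supported sequences. The Lie algebra $\mathfrak{g}^M$ of $\mathbb{N} \times \mathbb{N}$ matrices with finitely many nonzero entries in each row and each column acts on $V^*$, preserving $V_*$, hence acts on $V^*/V_*$. Then this action on $V^*/V_*$ is transitive on nonzero elements: for any two nonzero $x, y \in V^*/V_*$ there exists $a \in \mathfrak{g}^M$ with $a \cdot x = y$. -/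
/-- Row vectors `V* = F^ℕ`, the subspace `V_*` of finitely supported ones, and matrices with
finitely many nonzero entries in every row and every column acting by right multiplication:
the induced action on `V*/V_*` is transitive on nonzero elements.  Concretely: for any
`x, y : ℕ → F` neither of which is finitely supported (i.e. nonzero classes mod `V_*`),
there is a matrix `a` with finite rows and columns such that `x·a - y` is finitely
supported, i.e. `a` maps the class of `x` to the class of `y`. -/
theorem matrices_transitive_on_quotient (F : Type*) [Field F]
    (x y : ℕ → F)
    (hx : ¬ (Function.support x).Finite) (hy : ¬ (Function.support y).Finite) :
    ∃ a : ℕ → ℕ → F,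
      (∀ i, (Function.support (a i)).Finite) ∧
      (∀ j, (Function.support fun i => a i j).Finite) ∧
      (Function.support fun j => (∑ᶠ i, x i * a i j) - y j).Finite := by
  have hx' : (Function.support x).Infinite := hx
  set e := hx'.natEmbedding with he
  set n : ℕ → ℕ := fun j => (e j : ℕ) with hn
  have hninj : Function.Injective n := fun a b h => e.injective (Subtype.ext h)
  have hxn : ∀ j, x (n j) ≠ 0 := fun j => (e j).2
  refine ⟨fun i j => if i = n j then y j / x (n j) else 0, ?_, ?_, ?_⟩
  · intro i
    apply Set.Finite.subset ((Set.finite_singleton i).preimage hninj.injOn)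
    intro j hj
    simp only [Function.mem_support] at hj
    by_contra h
    simp only [Set.mem_preimage, Set.mem_singleton_iff] at h
    exact hj (if_neg fun h' => h h'.symm)
  · intro j
    apply Set.Finite.subset (Set.finite_singleton (n j))
    intro i hi
    simp only [Function.mem_support] at hi
    by_contra h
    exact hi (if_neg h)
  · have : ∀ j, (∑ᶠ i, x i * if i = n j then y j / x (n j) else 0) = y j := by
      intro j
      rw [finsum_eq_single _ (n j)]
      · rw [if_pos rfl]
        rw [mul_div_assoc'] ; exact mul_div_cancel_left₀ _ (hxn j)
      · intro i hi
        rw [if_neg hi, mul_zero]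
    have h0 : (Function.support fun j => (∑ᶠ i, x i * if i = n j then y j / x (n j) else 0) - y j) = ∅ := by
      ext j
      rw [Set.mem_empty_iff_false, iff_false, Function.mem_support, not_not, this j, sub_self]
    rw [h0]
    exact Set.finite_empty
end

section
/- Let $V$ be a countable-dimensional complex vector space with basis $(v_i)_{i\in\mathbb{N}}$, $V_* \subseteq V^*$ the span of the dual basis, and $\mathfrak{g}^M = \mathfrak{gl}^M(V, V_*)$ the Mackey Lie algebra of endomorphisms of $V$ whose duals preserve $V_*$. Then $V^*/V_*$ is a simple $\mathfrak{g}^M$-module. -/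
/-- Membership in the span of the coordinate functionals is equivalent to having
finite support on the basis. -/
lemma mem_span_coord_iff {V : Type*} [AddCommGroup V] [Module ℂ V] (B : Module.Basis ℕ ℂ V)
    (f : Module.Dual ℂ V) :
    f ∈ Submodule.span ℂ (Set.range B.coord) ↔ {i | f (B i) ≠ 0}.Finite := by
  constructor
  · intro hf
    induction hf using Submodule.span_induction with
    | mem x hx =>
      obtain ⟨j, rfl⟩ := hx
      apply Set.Finite.subset (Set.finite_singleton j)
      intro i hi
      simp only [Set.mem_setOf_eq, Module.Basis.coord_apply, Module.Basis.repr_self] at hi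
      by_contra h
      rw [Finsupp.single_apply] at hi
      exact hi (if_neg fun hij => h (by simp [hij]))
    | zero => simp
    | add x y _ _ hx hy =>
      apply Set.Finite.subset (hx.union hy)
      intro i hi
      simp only [Set.mem_setOf_eq, LinearMap.add_apply] at hi
      by_contra h
      simp only [Set.mem_union, Set.mem_setOf_eq, not_or, not_not] at h
      simp [h.1, h.2] at hi
    | smul c x _ hx =>
      apply Set.Finite.subset hx
      intro i hi
      simp only [Set.mem_setOf_eq, LinearMap.smul_apply, smul_eq_mul] at hi
      exact fun h => hi (by simp [h])
  · intro hfin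
    have hf : f = ∑ i ∈ hfin.toFinset, f (B i) • B.coord i := by
      apply B.ext
      intro j
      simp only [LinearMap.coe_sum, Finset.sum_apply, LinearMap.smul_apply,
        Module.Basis.coord_apply, Module.Basis.repr_self, smul_eq_mul]
      rw [Finset.sum_eq_single j]
      · rw [Finsupp.single_apply, if_pos rfl, mul_one]
      · intro i _ hij
        rw [Finsupp.single_apply, if_neg (Ne.symm hij), mul_zero]
      · intro hj
        simp only [Set.Finite.mem_toFinset, Set.mem_setOf_eq, not_not] at hj
        simp [hj]
    rw [hf]
    exact Submodule.sum_mem _ fun i _ =>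
      Submodule.smul_mem _ _ (Submodule.subset_span ⟨i, rfl⟩)

/-- Let `V` be a countable-dimensional complex vector space with basis `(vᵢ)`, `V_* ⊆ V*` the
span of the dual basis, and `𝔤^M` the Mackey Lie algebra of endomorphisms `φ` of `V` whose
duals preserve `V_*`.  Then `V*/V_*` is a simple `𝔤^M`-module (for the action induced by the
dual action): it is nonzero, and every subspace invariant under all such `φ` is `⊥` or `⊤`. -/
theorem quotient_dual_simple_over_mackey (V : Type*) [AddCommGroup V] [Module ℂ V]
    (B : Module.Basis ℕ ℂ V)
    (Vs : Submodule ℂ (Module.Dual ℂ V)) (hVs : Vs = Submodule.span ℂ (Set.range B.coord)) :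
    Nontrivial (Module.Dual ℂ V ⧸ Vs) ∧
    ∀ p : Submodule ℂ (Module.Dual ℂ V ⧸ Vs),
      (∀ φ : Module.End ℂ V, Vs.map (Module.Dual.transpose (R := ℂ) φ) ≤ Vs →
        ∀ f : Module.Dual ℂ V, Submodule.Quotient.mk f ∈ p →
          Submodule.Quotient.mk (Module.Dual.transpose (R := ℂ) φ f) ∈ p) →
      p = ⊥ ∨ p = ⊤ := by
  have hmem : ∀ f : Module.Dual ℂ V, f ∈ Vs ↔ {i | f (B i) ≠ 0}.Finite := by
    intro f; rw [hVs]; exact mem_span_coord_iff B f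
  constructor
  · refine ⟨Submodule.Quotient.mk B.sumCoords, 0, ?_⟩
    rw [Ne, Submodule.Quotient.mk_eq_zero, hmem]
    intro hfin
    have : {i : ℕ | B.sumCoords (B i) ≠ 0} = Set.univ := by
      ext i; simp
    rw [this] at hfin
    exact Set.infinite_univ hfin
  · intro p hp
    by_cases hbot : p = ⊥
    · exact Or.inl hbot
    right
    obtain ⟨x, hxp, hx0⟩ := Submodule.exists_mem_ne_zero_of_ne_bot hbot
    obtain ⟨f, rfl⟩ := Submodule.Quotient.mk_surjective Vs x
    have hfVs : f ∉ Vs := by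
      intro h; exact hx0 ((Submodule.Quotient.mk_eq_zero Vs).mpr h)
    have hS : {i | f (B i) ≠ 0}.Infinite := fun hfin => hfVs ((hmem f).mpr hfin)
    set S := {i | f (B i) ≠ 0}
    have σ := hS.natEmbedding
    have hσinj : Function.Injective (fun j => (σ j : ℕ)) :=
      Subtype.coe_injective.comp σ.injective
    rw [Submodule.eq_top_iff']
    intro y
    obtain ⟨g, rfl⟩ := Submodule.Quotient.mk_surjective Vs y
    -- build φ
    set φ : Module.End ℂ V := B.constr ℂ (fun j => (g (B j) / f (B (σ j))) • B (σ j)) with hφ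
    have hφB : ∀ j, φ (B j) = (g (B j) / f (B (σ j))) • B (σ j) := fun j => B.constr_basis ℂ _ j
    have hfσ : ∀ j, f (B (σ j)) ≠ 0 := fun j => (σ j).2
    -- transpose φ preserves Vs
    have hpres : Vs.map (Module.Dual.transpose (R := ℂ) φ) ≤ Vs := by
      rw [Submodule.map_le_iff_le_comap]
      intro w hw
      rw [Submodule.mem_comap]
      rw [hmem] at hw ⊢
      rw [Module.Dual.transpose_apply]
      have key : {i | (w.comp φ) (B i) ≠ 0} ⊆ (fun j => (σ j : ℕ)) ⁻¹' {i | w (B i) ≠ 0} := by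
        intro i hi
        simp only [Set.mem_setOf_eq, LinearMap.comp_apply, hφB] at hi
        simp only [map_smul, smul_eq_mul] at hi
        exact fun h => hi (by simp [h])
      exact Set.Finite.subset (Set.Finite.preimage hσinj.injOn hw) key
    have := hp φ hpres f hxp
    have hcomp : Module.Dual.transpose (R := ℂ) φ f = g := by
      rw [Module.Dual.transpose_apply]
      apply B.ext
      intro j
      simp only [LinearMap.comp_apply, hφB, map_smul, smul_eq_mul]
      exact div_mul_cancel₀ _ (hfσ j)
    rwa [hcomp] at this
end

section
/- Let $x \in (V^*/V_*)^{\otimes k}$ be a nonzero element, where $V^*/V_*$ is the quotient of all sequences in $\mathbb{C}^{\mathbb{N}}$ by finitely supported ones. Suppose $h$ is a diagonal matrix whose diagonal entries take values $t_1, \ldots, t_k$ on a partition $\mathbb{N} = I_1 \sqcup \cdots \sqcup I_k$ into infinite subsets, where the $t_j \in \mathbb{C}$ are chosen so that the sums $\sum_j m_j t_j$ over tuples of non-negative integers with $\sum_j m_j = k$ are pairwise distinct for distinct tuples (e.g., $t_j = (k+1)^j$). Then the generalized eigenspace decomposition of the action of $h$ on $(V^*/V_*)^{\otimes k}$ separates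 tensors according to the multiset of blocks in which their tensorands are concentrated: the eigenvalue of $h$ on a simple tensor $x_1 \otimes \cdots \otimes x_k$ with $x_i$ concentrated in $I_{j_i}$ is $\sum_i t_{j_i}$. -/
open TensorProduct

variable (F : Type*) [Field F]

/-- The subspace of finitely supported sequences (`V_*` inside `V* = F^ℕ`). -/
def finSupp : Submodule F (ℕ → F) where
  carrier := {x | (Function.support x).Finite}
  add_mem' := fun hx hy => Set.Finite.subset (hx.union hy) (Function.support_add _ _)
  zero_mem' := by simp [Function.support_zero]
  smul_mem' := fun c x hx =>
    Set.Finite.subset hx (Function.support_const_smul_subset c x)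

variable {F}

/-- The Leibniz-rule action of an endomorphism `A` on the `s`-th tensor power. -/
noncomputable def leibniz {s : ℕ} {Q : Type*} [AddCommGroup Q] [Module F Q]
    (A : Q →ₗ[F] Q) :
    (⨂[F] _ : Fin s, Q) →ₗ[F] ⨂[F] _ : Fin s, Q :=
  ∑ i : Fin s, PiTensorProduct.map (Function.update (fun _ => LinearMap.id) i A)

/-- The diagonal matrix whose entry at `n` is `t (J n)`, acting on row vectors `ℕ → ℂ`. -/
def diagMul {k : ℕ} (J : ℕ → Fin k) (t : Fin k → ℂ) : (ℕ → ℂ) →ₗ[ℂ] (ℕ → ℂ) where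
  toFun x := fun n => t (J n) * x n
  map_add' x y := by funext n; simp [mul_add]
  map_smul' c x := by
    funext n
    simp only [Pi.smul_apply, smul_eq_mul, RingHom.id_apply]
    ring

theorem diagMul_le_comap {k : ℕ} (J : ℕ → Fin k) (t : Fin k → ℂ) :
    finSupp ℂ ≤ (finSupp ℂ).comap (diagMul J t) := by
  intro x hx
  refine Set.Finite.subset hx fun n hn => ?_
  simp only [Function.mem_support] at hn ⊢
  exact fun h => hn (by simp [diagMul, h])

/-- Let `h` be the diagonal matrix with entry `t j` on the (infinite) block `I_j = J⁻¹(j)` of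
a partition of `ℕ` into `k` blocks, where the sums `∑ m_j t_j` (over tuples of non-negative
integers summing to `k`) are pairwise distinct.  Acting by the Leibniz rule on
`(V*/V_*)^{⊗k}`, `h` has the simple tensor `x₁ ⊗ ⋯ ⊗ x_k`, with `x_i` concentrated in the
block `I_{j_i}`, as an eigenvector with eigenvalue `∑ᵢ t_{j_i}`. -/
theorem diag_eigenvalue_on_concentrated_tensor
    (k : ℕ) (hk : 1 ≤ k) (J : ℕ → Fin k) (hJ : ∀ j, {n | J n = j}.Infinite)
    (t : Fin k → ℂ)
    (ht : ∀ m m' : Fin k → ℕ, (∑ j, m j) = k → (∑ j, m' j) = k →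
      (∑ j, (m j : ℂ) * t j) = (∑ j, (m' j : ℂ) * t j) → m = m')
    (x : Fin k → (ℕ → ℂ)) (jx : Fin k → Fin k)
    (hconc : ∀ i, {n | x i n ≠ 0 ∧ J n ≠ jx i}.Finite) :
    leibniz (Submodule.mapQ (finSupp ℂ) (finSupp ℂ) (diagMul J t) (diagMul_le_comap J t))
        (PiTensorProduct.tprod ℂ fun i : Fin k => (finSupp ℂ).mkQ (x i))
      = (∑ i, t (jx i)) • PiTensorProduct.tprod ℂ fun i : Fin k => (finSupp ℂ).mkQ (x i) := by
  classical
  have key : ∀ i, Submodule.mapQ (finSupp ℂ) (finSupp ℂ) (diagMul J t) (diagMul_le_comap J t)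
      ((finSupp ℂ).mkQ (x i)) = t (jx i) • (finSupp ℂ).mkQ (x i) := by
    intro i
    rw [Submodule.mkQ_apply, Submodule.mapQ_apply, ← Submodule.Quotient.mk_smul]
    rw [Submodule.Quotient.eq']
    refine Set.Finite.subset (hconc i) fun n hn => ?_
    simp only [Function.mem_support, Set.mem_setOf_eq] at hn ⊢
    by_contra h
    push_neg at h
    apply hn
    rcases Classical.em (x i n = 0) with h0 | h0
    · simp [diagMul, h0]
    · have := h h0
      show -(t (J n) * x i n) + t (jx i) * x i n = 0
      rw [this]; ring
  rw [leibniz, LinearMap.sum_apply, Finset.sum_smul]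
  refine Finset.sum_congr rfl fun i _ => ?_
  rw [PiTensorProduct.map_tprod]
  have : (fun l => Function.update (fun _ => LinearMap.id) i
      (Submodule.mapQ (finSupp ℂ) (finSupp ℂ) (diagMul J t) (diagMul_le_comap J t)) l
      ((fun i => (finSupp ℂ).mkQ (x i)) l))
      = Function.update (fun i => (finSupp ℂ).mkQ (x i)) i
        (t (jx i) • (finSupp ℂ).mkQ (x i)) := by
    funext l
    rcases Classical.em (l = i) with rfl | hl
    · simpa using key l
    · simp [Function.update_of_ne hl]
  rw [this, MultilinearMap.map_update_smul, Function.update_eq_self]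
end
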